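/- Let r > 1, K > 0, and for large λ let s_{1,λ} be the smaller positive solution of e^s = s^{r-1} λ K. Then s_{1,λ} = (λK)^{-1/(r-1)} (1 + δ(λ)) where δ(λ) = (1/(r-1))(λK)^{-1/(r-1)}(1 + o(1)) as λ → ∞; in particular s_{1,λ} · (λK)^{1/(r-1)} → 1 as λ → ∞. -/

import Mathlib

open Filter

theorem small_solution_asymptotics
    (r K : ℝ) (hr : 1 < r) (hK : 0 < K) (s₁ : ℝ → ℝ)
    (h : ∀ lam : ℝ, Real.exp (r - 1) < lam * K * (r - 1) ^ (r - 1) →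
      0 < s₁ lam ∧ Real.exp (s₁ lam) = (s₁ lam) ^ (r - 1) * (lam * K) ∧
      ∀ s : ℝ, 0 < s → Real.exp s = s ^ (r - 1) * (lam * K) → s₁ lam ≤ s) :
    Tendsto (fun lam : ℝ =>
        (s₁ lam * (lam * K) ^ (1 / (r - 1)) - 1) * (r - 1) * (lam * K) ^ (1 / (r - 1)))
      atTop (nhds 1) ∧
    Tendsto (fun lam : ℝ => s₁ lam * (lam * K) ^ (1 / (r - 1))) atTop (nhds 1) := by
  set c := r - 1 with hc
  have hc0 : 0 < c := by simp only [hc]; linarith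
  -- the hypothesis applies eventually
  have hcond : ∀ᶠ lam in atTop, Real.exp c < lam * K * c ^ c := by
    have hpos : (0:ℝ) < K * c ^ c := by positivity
    have ht : Tendsto (fun lam : ℝ => lam * (K * c ^ c)) atTop atTop :=
      Tendsto.atTop_mul_const hpos tendsto_id
    filter_upwards [ht.eventually_gt_atTop (Real.exp c)] with lam hlam
    nlinarith [hlam]
  have hpos_ev : ∀ᶠ lam in atTop, 0 < s₁ lam := by
    filter_upwards [hcond] with lam h2
    exact (h lam h2).1
  -- s₁ is eventually small
  have hsmall : ∀ ε : ℝ, 0 < ε → ∀ᶠ lam in atTop, s₁ lam < ε := by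
    intro ε hε
    set e2 := ε / 2 with he2
    have he20 : 0 < e2 := by positivity
    have h1 : ∀ᶠ lam in atTop, Real.exp e2 < e2 ^ c * (lam * K) := by
      have hpos : (0:ℝ) < e2 ^ c * K := by positivity
      have ht : Tendsto (fun lam : ℝ => lam * (e2 ^ c * K)) atTop atTop :=
        Tendsto.atTop_mul_const hpos tendsto_id
      filter_upwards [ht.eventually_gt_atTop (Real.exp e2)] with lam hlam
      nlinarith [hlam]
    filter_upwards [hcond, h1] with lam h2 h3
    obtain ⟨hpos, heq, hmin⟩ := h lam h2
    set f : ℝ → ℝ := fun s => s ^ c * (lam * K) - Real.exp s with hf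
    have hcont : ContinuousOn f (Set.Icc 0 e2) := by
      apply ContinuousOn.sub
      · exact (ContinuousOn.rpow_const continuousOn_id
          (fun x _ => Or.inr hc0.le)).mul continuousOn_const
      · exact Real.continuous_exp.continuousOn
    have hf0 : f 0 = -1 := by
      simp [hf, Real.zero_rpow hc0.ne']
    have hmem : (0:ℝ) ∈ Set.Icc (f 0) (f e2) := by
      constructor
      · rw [hf0]; norm_num
      · simp only [hf]; linarith
    obtain ⟨x, hx, hfx⟩ := intermediate_value_Icc he20.le hcont hmem
    have hxne : x ≠ 0 := by
      intro hx0
      rw [hx0, hf0] at hfx; norm_num at hfx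
    have hx0 : 0 < x := lt_of_le_of_ne hx.1 (Ne.symm hxne)
    have hxeq : Real.exp x = x ^ c * (lam * K) := by
      simp only [hf] at hfx; linarith
    have := hmin x hx0 hxeq
    calc s₁ lam ≤ x := this
      _ ≤ e2 := hx.2
      _ < ε := by simp only [he2]; linarith
  have hlim0 : Tendsto s₁ atTop (nhds 0) := by
    rw [tendsto_order]
    constructor
    · intro a ha
      filter_upwards [hpos_ev] with lam hl
      linarith
    · intro b hb
      exact hsmall b hb
  -- key identity
  have key : ∀ᶠ lam in atTop, s₁ lam * (lam * K) ^ (1 / c) = Real.exp (s₁ lam / c) := by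
    filter_upwards [hcond, eventually_gt_atTop (0:ℝ)] with lam h2 hlam0
    obtain ⟨hpos, heq, -⟩ := h lam h2
    have hA : 0 < lam * K := mul_pos hlam0 hK
    have hlog : s₁ lam = c * Real.log (s₁ lam) + Real.log (lam * K) := by
      have hlg := congrArg Real.log heq
      rwa [Real.log_exp, Real.log_mul (Real.rpow_pos_of_pos hpos c).ne' hA.ne',
        Real.log_rpow hpos] at hlg
    rw [Real.rpow_def_of_pos hA]
    nth_rewrite 1 [← Real.exp_log hpos]
    rw [← Real.exp_add]
    congr 1
    field_simp
    linarith
  -- second limit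
  have ht2 : Tendsto (fun lam => Real.exp (s₁ lam / c)) atTop (nhds 1) := by
    have hdiv : Tendsto (fun lam => s₁ lam / c) atTop (nhds 0) := by
      simpa using hlim0.div_const c
    have := (Real.continuous_exp.tendsto 0).comp hdiv
    simpa [Function.comp_def] using this
  have T2 : Tendsto (fun lam : ℝ => s₁ lam * (lam * K) ^ (1 / c)) atTop (nhds 1) :=
    ht2.congr' (key.mono fun lam hl => hl.symm)
  refine ⟨?_, T2⟩
  -- first limit
  have hslope : Tendsto (fun t : ℝ => (Real.exp t - 1) / t) (nhdsWithin 0 {(0:ℝ)}ᶜ) (nhds 1) := by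
    have hd : HasDerivAt Real.exp (Real.exp 0) 0 := Real.hasDerivAt_exp 0
    have := hasDerivAt_iff_tendsto_slope.mp hd
    rw [Real.exp_zero] at this
    refine this.congr fun t => ?_
    simp [slope_def_field, div_eq_inv_mul]
  have hexp1 : Tendsto Real.exp (nhdsWithin 0 {(0:ℝ)}ᶜ) (nhds 1) := by
    have := (Real.continuous_exp.tendsto 0).mono_left
      (nhdsWithin_le_nhds (s := {(0:ℝ)}ᶜ))
    simpa using this
  have hg : Tendsto (fun t : ℝ => (Real.exp t - 1) / t * Real.exp t)
      (nhdsWithin 0 {(0:ℝ)}ᶜ) (nhds 1) := by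
    have := hslope.mul hexp1
    simpa using this
  have hcomp : Tendsto (fun lam => s₁ lam / c) atTop (nhdsWithin 0 {(0:ℝ)}ᶜ) := by
    rw [tendsto_nhdsWithin_iff]
    constructor
    · simpa using hlim0.div_const c
    · filter_upwards [hpos_ev] with lam hl
      simp only [Set.mem_compl_iff, Set.mem_singleton_iff]
      positivity
  have T1' : Tendsto (fun lam => (Real.exp (s₁ lam / c) - 1) / (s₁ lam / c)
      * Real.exp (s₁ lam / c)) atTop (nhds 1) := hg.comp hcomp
  refine T1'.congr' ?_
  filter_upwards [key, hpos_ev] with lam hk hp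
  have hs : s₁ lam ≠ 0 := hp.ne'
  have hμ : (lam * K) ^ (1 / c) = Real.exp (s₁ lam / c) / s₁ lam := by
    rw [eq_div_iff hs, mul_comm]
    exact hk
  rw [hμ, mul_comm (s₁ lam) (Real.exp (s₁ lam / c) / s₁ lam)] at hk ⊢
  rw [hk]  -- may fail; adjust
  field_simp
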